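/- Let G be a group containing a central element z of infinite order such that for every g ∈ G with gᵐ = z for some m ≥ 1 and every n ≥ 2, there exists f ∈ G with fⁿ = g (and then fᵐⁿ = z). Then G contains a subgroup isomorphic to ℚ containing z. -/

import Mathlib

open Nat in
/-- A sequence of compatible roots of `z`: `rootSeq n` is an `(n+1)!`-th root of `z`. -/
noncomputable def rootSeq {G : Type*} [Group G] (z : G)
    (hroots : ∀ g : G, ∀ m : ℕ, 1 ≤ m → g ^ m = z →
      ∀ n : ℕ, 2 ≤ n → ∃ f : G, f ^ n = g) :
    (n : ℕ) → {x : G // x ^ (n + 1)! = z}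
  | 0 => ⟨z, by simp⟩
  | (n + 1) =>
    let p := rootSeq z hroots n
    have hex := hroots p.1 ((n + 1)!)
      (Nat.one_le_iff_ne_zero.mpr (Nat.factorial_ne_zero _)) p.2 (n + 2) (by omega)
    ⟨Classical.choose hex, by
      have hf := Classical.choose_spec hex
      rw [Nat.factorial_succ (n + 1), pow_mul, hf, p.2]⟩

theorem rootSeq_succ {G : Type*} [Group G] (z : G)
    (hroots : ∀ g : G, ∀ m : ℕ, 1 ≤ m → g ^ m = z →
      ∀ n : ℕ, 2 ≤ n → ∃ f : G, f ^ n = g) (n : ℕ) :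
    (rootSeq z hroots (n + 1)).1 ^ (n + 2) = (rootSeq z hroots n).1 := by
  rw [rootSeq]
  exact Classical.choose_spec (hroots (rootSeq z hroots n).1 ((n + 1).factorial)
    (Nat.one_le_iff_ne_zero.mpr (Nat.factorial_ne_zero _)) (rootSeq z hroots n).2
    (n + 2) (by omega))

open Nat in
theorem rootSeq_tower {G : Type*} [Group G] (z : G)
    (hroots : ∀ g : G, ∀ m : ℕ, 1 ≤ m → g ^ m = z →
      ∀ n : ℕ, 2 ≤ n → ∃ f : G, f ^ n = g) :
    ∀ m n : ℕ, n ≤ m → ∀ a : ℤ,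
      (rootSeq z hroots m).1 ^ (a * ((m + 1)! / (n + 1)! : ℕ)) =
        (rootSeq z hroots n).1 ^ a := by
  intro m
  induction m with
  | zero => intro n hn a; interval_cases n; simp
  | succ m ih =>
    intro n hn a
    rcases Nat.eq_or_lt_of_le hn with h | h
    · subst h
      rw [Nat.div_self (Nat.factorial_pos _)]
      simp
    · have hn' : n ≤ m := by omega
      have hdvd : (n + 1)! ∣ (m + 1)! := Nat.factorial_dvd_factorial (by omega)
      have hq : ((m + 2)! / (n + 1)! : ℕ) = (m + 2) * ((m + 1)! / (n + 1)!) := by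
        rw [Nat.factorial_succ (m + 1), Nat.mul_div_assoc _ hdvd]
      have key : a * ((m + 1 + 1)! / (n + 1)! : ℕ) =
          ((m + 2 : ℕ) : ℤ) * (a * ((m + 1)! / (n + 1)! : ℕ)) := by
        push_cast [hq]; ring
      rw [key, zpow_mul, zpow_natCast, rootSeq_succ z hroots m, ih n hn' a]

theorem contains_rat_of_root_extraction {G : Type*} [Group G]
    (z : G) (hz : z ∈ Subgroup.center G) (hord : ¬ IsOfFinOrder z)
    (hroots : ∀ g : G, ∀ m : ℕ, 1 ≤ m → g ^ m = z →
      ∀ n : ℕ, 2 ≤ n → ∃ f : G, f ^ n = g) :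
    ∃ φ : Multiplicative ℚ →* G, Function.Injective φ ∧
      φ (Multiplicative.ofAdd (1 : ℚ)) = z := by
  set g : ℕ → G := fun n => (rootSeq z hroots n).1 with hg
  have hgz : ∀ n, g n ^ (n + 1).factorial = z := fun n => (rootSeq z hroots n).2
  -- the value of the would-be homomorphism at `q`
  set F : ℚ → G := fun q => g q.den ^ (q.num * ((q.den + 1).factorial / q.den : ℕ)) with hF
  -- representation at a higher level
  have hrep : ∀ (q : ℚ) (M : ℕ), q.den ≤ M →
      F q = g M ^ (q.num * ((M + 1).factorial / q.den : ℕ)) := by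
    intro q M hM
    have hd0 : 0 < q.den := q.pos
    have hdvd1 : q.den ∣ (q.den + 1).factorial :=
      Nat.dvd_factorial hd0 (by omega)
    have hdvd2 : (q.den + 1).factorial ∣ (M + 1).factorial :=
      Nat.factorial_dvd_factorial (by omega)
    have hnat : ((q.den + 1).factorial / q.den) * ((M + 1).factorial / (q.den + 1).factorial)
        = (M + 1).factorial / q.den := by
      rw [Nat.div_mul_div_comm hdvd1 hdvd2, mul_comm q.den,
        Nat.mul_div_mul_left _ _ (Nat.factorial_pos _)]
    have := rootSeq_tower z hroots M q.den hM
      (q.num * ((q.den + 1).factorial / q.den : ℕ))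
    rw [show F q = g q.den ^ (q.num * ((q.den + 1).factorial / q.den : ℕ)) from rfl, ← this]
    congr 1
    rw [← hnat]
    push_cast
    ring
  have hFadd : ∀ q r : ℚ, F (q + r) = F q * F r := by
    intro q r
    set M : ℕ := max (q + r).den (max q.den r.den) with hM
    have h1 : (q + r).den ≤ M := le_max_left _ _
    have h2 : q.den ≤ M := le_trans (le_max_left _ _) (le_max_right _ _)
    have h3 : r.den ≤ M := le_trans (le_max_right _ _) (le_max_right _ _)
    rw [hrep _ M h1, hrep _ M h2, hrep _ M h3, ← zpow_add]
    congr 1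
    -- integer identity, proved by casting to ℚ
    have cast_val : ∀ s : ℚ, s.den ≤ M →
        ((s.num * ((M + 1).factorial / s.den : ℕ) : ℤ) : ℚ)
          = s * ((M + 1).factorial : ℚ) := by
      intro s hs
      have hdvd : (s.den : ℕ) ∣ (M + 1).factorial := Nat.dvd_factorial s.pos (by omega)
      have hden : (s.den : ℚ) ≠ 0 := by exact_mod_cast s.den_nz
      push_cast [Nat.cast_div hdvd hden]
      conv_rhs => rw [← Rat.num_div_den s]
      field_simp
      rw [mul_assoc, ← Int.cast_natCast (R := ℚ) s.den, ← Int.cast_mul,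
        Int.ediv_mul_cancel (Int.natCast_dvd_natCast.mpr hdvd)]
      simp
    apply Int.cast_injective (α := ℚ)
    rw [Int.cast_add, cast_val _ h1, cast_val _ h2, cast_val _ h3]
    ring
  -- no g n has finite order
  have hgord : ∀ n, ¬ IsOfFinOrder (g n) := by
    intro n hfin
    exact hord (hgz n ▸ hfin.pow)
  have hFinj : ∀ q : ℚ, F q = 1 → q = 0 := by
    intro q hq
    have hdvd : (q.den : ℕ) ∣ (q.den + 1).factorial := Nat.dvd_factorial q.pos (by omega)
    have hpos : 0 < ((q.den + 1).factorial / q.den : ℕ) :=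
      Nat.div_pos (Nat.le_of_dvd (Nat.factorial_pos _) hdvd) q.pos
    have : q.num * ((q.den + 1).factorial / q.den : ℕ) = 0 := by
      by_contra hne
      exact hgord q.den (isOfFinOrder_iff_zpow_eq_one.mpr ⟨_, hne, hq⟩)
    have hnum : q.num = 0 := by
      rcases mul_eq_zero.mp this with h | h
      · exact h
      · exfalso; omega
    exact Rat.num_eq_zero.mp hnum
  refine ⟨MonoidHom.mk' (fun q => F q.toAdd) (by
      intro a b
      exact hFadd a.toAdd b.toAdd), ?_, ?_⟩
  · rw [injective_iff_map_eq_one]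
    intro a ha
    have := hFinj a.toAdd ha
    simpa using this
  · show F 1 = z
    have e : F 1 = g 1 ^ (2 : ℤ) := by norm_num [hF, Nat.factorial]
    rw [e, show (2 : ℤ) = ((0 + 2 : ℕ) : ℤ) from rfl, zpow_natCast, hg,
      rootSeq_succ z hroots 0]
    rfl
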